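/- Let G be a tree grammar with finitely many nonterminals and finitely many rules, and cost function with cost(r) > 0 for every rule r. Then for every nonterminal X, the set C_X = {cost(p) : p a program generated from X} ⊆ ℝ is well-ordered by <, i.e., every nonempty subset of C_X has a least element. -/

import Mathlib

/-- Finitely-branching trees with nodes labeled by elements of `R` (derivation trees). -/
inductive Tree' (R : Type) : Type
  | node : R → List (Tree' R) → Tree' R

/-- The label of the root node. -/
def Tree'.rootLabel {R : Type} : Tree' R → R
  | .node r _ => r

/-- A tree grammar: nonterminals `Γ`, derivation rules `R`, each rule having a
left-hand nonterminal and a list of argument nonterminals. -/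
structure TreeGrammar where
  Γ : Type
  R : Type
  lhs : R → Γ
  args : R → List Γ

/-- Well-formed derivation trees (programs) of a tree grammar. -/
inductive TreeGrammar.WF (G : TreeGrammar) : Tree' G.R → Prop
  | node (r : G.R) (ts : List (Tree' G.R))
      (hlen : ts.length = (G.args r).length)
      (hwf : ∀ t ∈ ts, G.WF t)
      (hlhs : ∀ i : ℕ, (h : i < ts.length) →
        G.lhs (ts[i].rootLabel) = (G.args r)[i]'(hlen ▸ h)) :
      G.WF (Tree'.node r ts)

/-- `p` is a program generated from the nonterminal `X`. -/
def TreeGrammar.GenFrom (G : TreeGrammar) (X : G.Γ) (p : Tree' G.R) : Prop :=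
  G.WF p ∧ G.lhs p.rootLabel = X

/-- The cost of a program, extending a cost function on rules. -/
def costP {R : Type} (cost : R → ℝ) : Tree' R → ℝ
  | .node r ts => cost r + (ts.attach.map (fun t => costP cost t.1)).sum
decreasing_by
  have := List.sizeOf_lt_of_mem t.2
  simp only [Tree'.node.sizeOf_spec]
  omega

/-- The number of nodes of a derivation tree. -/
def sizeP {R : Type} : Tree' R → ℕ
  | .node _ ts => 1 + (ts.attach.map (fun t => sizeP t.1)).sum
decreasing_by
  have := List.sizeOf_lt_of_mem t.2
  simp only [Tree'.node.sizeOf_spec]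
  omega

/-- The depth of a derivation tree: number of nodes on a longest root-to-leaf path. -/
def depthP {R : Type} : Tree' R → ℕ
  | .node _ ts => 1 + (ts.attach.map (fun t => depthP t.1)).foldr max 0
decreasing_by
  have := List.sizeOf_lt_of_mem t.2
  simp only [Tree'.node.sizeOf_spec]
  omega

/-- `p'` is a successor of `p` with respect to the nonterminal `X`:
`p'` is generated from `X`, has strictly larger cost than `p`, and no program
generated from `X` has cost strictly between the two. -/
def IsSucc (G : TreeGrammar) (cost : G.R → ℝ) (X : G.Γ) (p p' : Tree' G.R) : Prop :=
  G.GenFrom X p' ∧ costP cost p < costP cost p' ∧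
    ∀ p'', G.GenFrom X p'' →
      ¬(costP cost p < costP cost p'' ∧ costP cost p'' < costP cost p')

/-- `X` occurs as the left-hand nonterminal of the rule labeling some node of the tree. -/
inductive OccursLhs (G : TreeGrammar) (X : G.Γ) : Tree' G.R → Prop
  | here (r : G.R) (ts : List (Tree' G.R)) : G.lhs r = X → OccursLhs G X (.node r ts)
  | there (r : G.R) (ts : List (Tree' G.R)) (t : Tree' G.R) :
      t ∈ ts → OccursLhs G X t → OccursLhs G X (.node r ts)

/-- Condition (*): along every root-to-leaf path, no nonterminal occurs twice as the
left-hand nonterminal of the rules labeling the nodes on the path. -/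
inductive StarCond (G : TreeGrammar) : Tree' G.R → Prop
  | node (r : G.R) (ts : List (Tree' G.R))
      (hsub : ∀ t ∈ ts, StarCond G t)
      (hnew : ∀ t ∈ ts, ¬ OccursLhs G (G.lhs r) t) :
      StarCond G (.node r ts)

/-- `IsSubtree s t`: `s` is the subtree of `t` rooted at some node of `t`. -/
inductive IsSubtree {R : Type} : Tree' R → Tree' R → Prop
  | refl (t : Tree' R) : IsSubtree t t
  | child (s : Tree' R) (r : R) (ts : List (Tree' R)) (t : Tree' R) :
      t ∈ ts → IsSubtree s t → IsSubtree s (.node r ts)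

/-- `IsStrictSubtree s t`: `s` is the subtree of `t` rooted at a strict descendant
of the root of `t`. -/
inductive IsStrictSubtree {R : Type} : Tree' R → Tree' R → Prop
  | child (s : Tree' R) (r : R) (ts : List (Tree' R)) (t : Tree' R) :
      t ∈ ts → IsSubtree s t → IsStrictSubtree s (.node r ts)

/-- The subtree of a tree at a given position (a list of child indices), if it exists. -/
def subtreeAt {R : Type} : Tree' R → List ℕ → Option (Tree' R)
  | t, [] => some t
  | .node _ ts, i :: is =>
      match ts[i]? with
      | some t => subtreeAt t is
      | none => none

/-- Replacing the subtree at a given position by `q`. -/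
def replaceAt {R : Type} : Tree' R → List ℕ → Tree' R → Tree' R
  | _, [], q => q
  | .node r ts, i :: is, q =>
      match ts[i]? with
      | some t => .node r (ts.set i (replaceAt t is q))
      | none => .node r ts

open scoped ENNReal in
/-- The Bellman operator associated with a tree grammar and a cost function. -/
noncomputable def bellman (G : TreeGrammar) (cost : G.R → ℝ) (c : G.Γ → ℝ≥0∞) : G.Γ → ℝ≥0∞ :=
  fun X => ⨅ r ∈ {r : G.R | G.lhs r = X},
    (ENNReal.ofReal (cost r) + ((G.args r).map c).sum)


lemma costP_nonneg {R : Type} (cost : R → ℝ) (hpos : ∀ r, 0 ≤ cost r) :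
    ∀ p, 0 ≤ costP cost p
  | .node r ts => by
    rw [costP]
    refine add_nonneg (hpos r) (List.sum_nonneg ?_)
    intro x hx
    simp only [List.mem_map, List.mem_attach, true_and] at hx
    obtain ⟨t, rfl⟩ := hx
    exact costP_nonneg cost hpos t.1
decreasing_by
  have := List.sizeOf_lt_of_mem t.2
  simp only [Tree'.node.sizeOf_spec]
  omega

lemma le_foldr_max {l : List ℕ} {x : ℕ} (hx : x ∈ l) : x ≤ l.foldr max 0 := by
  induction l with
  | nil => cases hx
  | cons a l ih =>
    rcases List.mem_cons.1 hx with rfl | h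
    · exact le_max_left _ _
    · exact le_trans (ih h) (le_max_right _ _)

lemma foldr_max_eq (l : List ℕ) : l.foldr max 0 = 0 ∨ ∃ x ∈ l, l.foldr max 0 = x := by
  induction l with
  | nil => exact Or.inl rfl
  | cons a l ih =>
    rcases le_total a (l.foldr max 0) with h | h
    · rcases ih with h0 | ⟨x, hx, he⟩
      · simp only [List.foldr_cons, h0, max_eq_left (h0 ▸ h : a ≤ 0)] at *
        omega
      · exact Or.inr ⟨x, List.mem_cons_of_mem _ hx, by rw [List.foldr_cons, max_eq_right h, he]⟩
    · exact Or.inr ⟨a, List.mem_cons_self, by rw [List.foldr_cons, max_eq_left h]⟩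

lemma cost_ge_depth {R : Type} (cost : R → ℝ) (ε : ℝ) (hε : 0 < ε)
    (hle : ∀ r, ε ≤ cost r) : ∀ p, ε * (depthP p : ℝ) ≤ costP cost p
  | .node r ts => by
    rw [costP, depthP]
    have hnn : ∀ x ∈ ts.attach.map (fun t => costP cost t.1), 0 ≤ x := by
      intro x hx
      simp only [List.mem_map, List.mem_attach, true_and] at hx
      obtain ⟨t, rfl⟩ := hx
      exact costP_nonneg cost (fun r => le_trans hε.le (hle r)) t.1
    rcases foldr_max_eq (ts.attach.map (fun t => depthP t.1)) with h0 | ⟨x, hx, he⟩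
    · rw [h0]
      push_cast
      have := List.sum_nonneg hnn
      have := hle r
      linarith
    · simp only [List.mem_map, List.mem_attach, true_and] at hx
      obtain ⟨t, rfl⟩ := hx
      have h1 : ε * (depthP t.1 : ℝ) ≤ costP cost t.1 := cost_ge_depth cost ε hε hle t.1
      have h2 : costP cost t.1 ≤ (ts.attach.map (fun t => costP cost t.1)).sum :=
        List.single_le_sum hnn _ (List.mem_map.2 ⟨t, List.mem_attach _ _, rfl⟩)
      have := hle r
      rw [he]
      push_cast
      nlinarith
decreasing_by
  all_goals (have := List.sizeOf_lt_of_mem t.2; simp only [Tree'.node.sizeOf_spec]; omega)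

lemma finite_wf_depth (G : TreeGrammar) [Fintype G.R] :
    ∀ n : ℕ, {p : Tree' G.R | G.WF p ∧ depthP p ≤ n}.Finite := by
  intro n
  induction n with
  | zero =>
    convert Set.finite_empty
    ext p
    rcases p with ⟨r, ts⟩
    simp [depthP]
  | succ n ih =>
    classical
    set K := (Finset.univ : Finset G.R).sup (fun r => (G.args r).length) with hK
    have hLfin : {l : List (Tree' G.R) |
        l.length ≤ K ∧ ∀ t ∈ l, G.WF t ∧ depthP t ≤ n}.Finite := by
      have : Finite ↥{p : Tree' G.R | G.WF p ∧ depthP p ≤ n} := ih.to_subtype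
      have h1 : {l : List ↥{p : Tree' G.R | G.WF p ∧ depthP p ≤ n} | l.length ≤ K}.Finite :=
        List.finite_length_le _ K
      refine (h1.image (List.map Subtype.val)).subset ?_
      rintro l ⟨hlen, hmem⟩
      refine ⟨l.attach.map (fun t => ⟨t.1, hmem t.1 t.2⟩), by rw [Set.mem_setOf_eq, List.length_map, List.length_attach]; exact hlen, ?_⟩
      simp [List.map_map]
    refine ((Set.finite_univ.prod hLfin).image
      (fun q : G.R × List (Tree' G.R) => Tree'.node q.1 q.2)).subset ?_
    rintro p ⟨hwf, hd⟩
    rcases p with ⟨r, ts⟩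
    refine ⟨(r, ts), ⟨Set.mem_univ _, ?_, ?_⟩, rfl⟩
    · cases hwf with
      | node _ _ hlen _ _ =>
        rw [hlen]
        exact Finset.le_sup (f := fun r => (G.args r).length) (Finset.mem_univ r)
    · intro t ht
      cases hwf with
      | node _ _ _ hwf' _ =>
        refine ⟨hwf' t ht, ?_⟩
        rw [depthP] at hd
        have : depthP t ≤ (ts.attach.map fun t => depthP t.1).foldr max 0 :=
          le_foldr_max (List.mem_map.2 ⟨⟨t, ht⟩, List.mem_attach _ _, rfl⟩)
        omega

/-- the set of costs of programs generated from `X` is well-ordered by `<`: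
every nonempty subset has a least element. -/
theorem stmt4 (G : TreeGrammar) [Fintype G.Γ] [Fintype G.R] (cost : G.R → ℝ)
    (hpos : ∀ r, 0 < cost r) (X : G.Γ) :
    ∀ s ⊆ {c : ℝ | ∃ p : Tree' G.R, G.GenFrom X p ∧ costP cost p = c},
      s.Nonempty → ∃ m ∈ s, ∀ x ∈ s, m ≤ x := by
  rintro s hs ⟨b, hb⟩
  obtain ⟨p0, hgen0, hcost0⟩ := hs hb
  have hRne : (Finset.univ : Finset G.R).Nonempty := ⟨p0.rootLabel, Finset.mem_univ _⟩
  set ε := Finset.univ.inf' hRne cost with hεdef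
  have hε : 0 < ε := (Finset.lt_inf'_iff hRne).mpr (fun r _ => hpos r)
  have hεle : ∀ r, ε ≤ cost r := fun r => Finset.inf'_le _ (Finset.mem_univ r)
  set N := ⌈b / ε⌉₊ with hN
  have hsub : s ∩ Set.Iic b ⊆ costP cost '' {p : Tree' G.R | G.WF p ∧ depthP p ≤ N} := by
    rintro c ⟨hcs, hcb⟩
    obtain ⟨p, hgen, rfl⟩ := hs hcs
    refine ⟨p, ⟨hgen.1, ?_⟩, rfl⟩
    have h1 : ε * (depthP p : ℝ) ≤ costP cost p := cost_ge_depth cost ε hε hεle p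
    have h2 : (depthP p : ℝ) ≤ b / ε := by
      have hcb' : costP cost p ≤ b := hcb
      rw [le_div_iff₀ hε, mul_comm]
      linarith
    calc depthP p = ⌈((depthP p : ℝ))⌉₊ := (Nat.ceil_natCast _).symm
      _ ≤ N := Nat.ceil_le_ceil h2
  have hfin : (s ∩ Set.Iic b).Finite :=
    (((finite_wf_depth G N)).image _).subset hsub
  obtain ⟨m, hm, hmin⟩ := Set.exists_min_image _ id hfin ⟨b, hb, le_refl b⟩
  refine ⟨m, hm.1, fun x hx => ?_⟩
  rcases le_total x b with h | h
  · exact hmin x ⟨hx, h⟩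
  · exact le_trans (hmin b ⟨hb, le_refl b⟩) h
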